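/- arXiv:2103.14646 — 4 statements merged into one kernel-verified Lean document; each statement's English description precedes it below -/
import Mathlib

section
/- Let (L, v) be a valued field with valuation ring O_L and maximal ideal m_L, and let K ⊆ L be a subfield, equipped with the restricted valuation, with valuation ring O_K = O_L ∩ K and maximal ideal m_K = m_L ∩ K. Assume the extension L/K is immediate, i.e.: (i) for every x ∈ Lˣ there exists c ∈ Kˣ with v(x) = v(c); and (ii) for every x ∈ O_L there exists c ∈ O_K with x − c ∈ m_L. Then the group homomorphism Kˣ/(1 + m_K) → Lˣ/(1 + m_L) induced by the inclusion Kˣ ⊆ Lˣ is bijective. -/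
/-- The group of principal units of a valued field `(L, v)`: the subgroup of `Lˣ`
consisting of the units `u` with `v (u - 1) < 1`, i.e. the group `1 + m_v`. -/
def principalUnits {L : Type*} [Field L] {Γ₀ : Type*} [LinearOrderedCommGroupWithZero Γ₀]
    (v : Valuation L Γ₀) : Subgroup Lˣ where
  carrier := {u : Lˣ | v ((u : L) - 1) < 1}
  one_mem' := by simp
  mul_mem' := by
    intro a b ha hb
    simp only [Set.mem_setOf_eq] at *
    have hva : v (a : L) = 1 := by
      have := v.map_one_add_of_lt ha
      simpa using this
    have : ((a * b : Lˣ) : L) - 1 = (a : L) * ((b : L) - 1) + ((a : L) - 1) := by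
      rw [Units.val_mul]; ring
    rw [this]
    refine lt_of_le_of_lt (v.map_add _ _) (max_lt ?_ ha)
    rw [v.map_mul, hva, one_mul]
    exact hb
  inv_mem' := by
    intro a ha
    simp only [Set.mem_setOf_eq] at *
    have hva : v (a : L) = 1 := by
      have := v.map_one_add_of_lt ha
      simpa using this
    have ha0 : (a : L) ≠ 0 := a.ne_zero
    have : ((a⁻¹ : Lˣ) : L) - 1 = ((a : L))⁻¹ * (1 - (a : L)) := by
      rw [Units.val_inv_eq_inv_val, mul_sub, mul_one, inv_mul_cancel₀ ha0]
    rw [this, v.map_mul, map_inv₀, hva, inv_one, one_mul, ← v.map_neg, neg_sub]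
    exact ha

@[simp]
theorem mem_principalUnits {L : Type*} [Field L] {Γ₀ : Type*}
    [LinearOrderedCommGroupWithZero Γ₀] (v : Valuation L Γ₀) (u : Lˣ) :
    u ∈ principalUnits v ↔ v ((u : L) - 1) < 1 :=
  Iff.rfl

/-- The principal units of the restriction of `v` to a subfield `K` are mapped into the
principal units of `(L, v)` by the inclusion `Kˣ → Lˣ`. -/
theorem principalUnits_le_comap {L : Type*} [Field L] {Γ₀ : Type*}
    [LinearOrderedCommGroupWithZero Γ₀] (v : Valuation L Γ₀) (K : Subfield L) :
    principalUnits (v.comap K.subtype) ≤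
      Subgroup.comap (Units.map K.subtype.toMonoidHom) (principalUnits v) := by
  intro u hu
  simp only [mem_principalUnits, Subgroup.mem_comap, Valuation.comap_apply] at *
  have h1 : ((Units.map K.subtype.toMonoidHom u : Lˣ) : L) = ((u : K) : L) := rfl
  have h2 : ((u : K) : L) - 1 = ((((u : K) - 1 : K)) : L) := by push_cast; ring
  rw [h1, h2]
  exact hu

/-- Let `(L, v)` be a valued field and let `K ⊆ L` be a subfield
equipped with the restricted valuation.  Assume the extension `L/K` is immediate:
(i) every `x ∈ Lˣ` has the same value as some `c ∈ Kˣ`; and (ii) every element of the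
valuation ring of `L` is congruent modulo the maximal ideal to an element of the
valuation ring of `K`.  Then the group homomorphism
`Kˣ/(1 + m_K) → Lˣ/(1 + m_L)` induced by the inclusion `Kˣ ⊆ Lˣ` is bijective. -/
theorem rv_iso_of_immediate {L : Type*} [Field L] {Γ₀ : Type*}
    [LinearOrderedCommGroupWithZero Γ₀] (v : Valuation L Γ₀) (K : Subfield L)
    (hval : ∀ x : Lˣ, ∃ c : Kˣ, v (x : L) = v (((c : K) : L)))
    (hres : ∀ x : L, v x ≤ 1 → ∃ c : K, v ((c : K) : L) ≤ 1 ∧ v (x - ((c : K) : L)) < 1) :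
    Function.Bijective
      (QuotientGroup.map (principalUnits (v.comap K.subtype)) (principalUnits v)
        (Units.map K.subtype.toMonoidHom) (principalUnits_le_comap v K)) := by
  constructor
  · intro a b
    refine QuotientGroup.induction_on a fun x => QuotientGroup.induction_on b fun y h => ?_
    rw [QuotientGroup.map_mk, QuotientGroup.map_mk, QuotientGroup.eq] at h
    rw [QuotientGroup.eq]
    rw [← map_inv, ← map_mul] at h
    simp only [mem_principalUnits] at h ⊢
    rw [Valuation.comap_apply]
    have h2 : ((((x⁻¹ * y : Kˣ) : K) - 1 : K) : L) = (((x⁻¹ * y : Kˣ) : K) : L) - 1 := by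
      push_cast; ring
    show v (((((x⁻¹ * y : Kˣ) : K) - 1 : K)) : L) < 1
    rw [h2]
    exact h
  · intro q
    refine QuotientGroup.induction_on q fun x => ?_
    obtain ⟨c, hc⟩ := hval x
    have hcK : (c : K) ≠ 0 := Units.ne_zero c
    have hc0 : ((c : K) : L) ≠ 0 := fun h => hcK (by exact_mod_cast h)
    have hvc : v ((c : K) : L) ≠ 0 := by simp [hc0]
    set z : L := ↑x * (((c : K) : L))⁻¹ with hzdef
    have hz : v z = 1 := by
      rw [hzdef, map_mul, map_inv₀, hc, mul_inv_cancel₀ hvc]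
    obtain ⟨d, hd1, hd2⟩ := hres z (le_of_eq hz)
    have hvd : v ((d : K) : L) = 1 := by
      by_contra hne
      have hlt : v ((d : K) : L) < 1 := lt_of_le_of_ne hd1 hne
      have : v z < 1 := by
        have : z = (z - ((d : K) : L)) + ((d : K) : L) := by ring
        rw [this]
        exact lt_of_le_of_lt (v.map_add _ _) (max_lt hd2 hlt)
      exact absurd hz (ne_of_lt this)
    have hd0 : d ≠ 0 := by
      intro h
      rw [h] at hvd
      simp at hvd
    refine ⟨↑(c * Units.mk0 d hd0), ?_⟩
    rw [QuotientGroup.map_mk, QuotientGroup.eq]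
    simp only [mem_principalUnits]
    have ha : (((Units.map K.subtype.toMonoidHom (c * Units.mk0 d hd0) : Lˣ)) : L)
        = ((c : K) : L) * ((d : K) : L) := by
      push_cast
      rfl
    set a : L := ((c : K) : L) * ((d : K) : L) with hadef
    have hd0' : ((d : K) : L) ≠ 0 := fun h => hd0 (by exact_mod_cast h)
    have ha0 : a ≠ 0 := mul_ne_zero hc0 hd0'
    have hcoe : (((Units.map K.subtype.toMonoidHom (c * Units.mk0 d hd0))⁻¹ * x : Lˣ) : L)
        = a⁻¹ * ↑x := by
      rw [Units.val_mul, Units.val_inv_eq_inv_val, ha]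
    rw [hcoe]
    have key : a⁻¹ * ↑x - 1 = a⁻¹ * (↑x - a) := by
      field_simp
    have hxa : (↑x : L) - a = ((c : K) : L) * (z - ((d : K) : L)) := by
      rw [hadef, hzdef]
      field_simp
    rw [key, map_mul, hxa, map_mul, map_inv₀, hadef, map_mul, hvd, mul_one]
    rw [← mul_assoc, inv_mul_cancel₀ hvc, one_mul]
    exact hd2
end

section
/- Let K be a field of characteristic p > 0 equipped with a normalized discrete valuation v (a surjective valuation v : Kˣ → ℤ), and let K̂ be the completion of K with respect to v, with extended valuation v̂. Suppose there exists α ∈ K̂ \ K with α^p ∈ K (identifying K with its image in K̂). Then the subfield K(α) ⊆ K̂ is an extension of K of degree p which is immediate over (K, v): the value group v̂(K(α)ˣ) equals v(Kˣ) = ℤ, and every element of the valuation ring of (K(α), v̂) is congruent, modulo the maximal ideal of that valuation ring, to an element of the valuation ring of (K, v). In particular, K(α)/K is a finite extension to which v extends uniquely and for which [K(α):K] = p while the residue field extension and value group extension are trivial, i.e. K(α)/K is a defect extension. -/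
open UniformSpace
open scoped IntermediateField

/-- Let `K` be a field of characteristic `p > 0` with a normalized
discrete valuation `v` (surjective onto `ℤ`), and let `K̂` be its completion with extended
valuation `v̂`.  Suppose there is `α ∈ K̂ \ K` with `α^p ∈ K`.  Then `K(α) ⊆ K̂` is an
extension of `K` of degree `p` which is immediate over `(K, v)`: the value group of
`K(α)` equals that of `K`, and every element of the valuation ring of `K(α)` is congruent
modulo the maximal ideal to an element of the valuation ring of `K`.  Moreover `v` extends
uniquely to `K(α)`; thus `K(α)/K` is a defect extension. -/
theorem defect_extension_of_inseparable_completion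
    (K : Type*) [Field K] (p : ℕ) (hp : p.Prime) [CharP K p]
    [vK : Valued K (WithZero (Multiplicative ℤ))]
    (hsurj : Function.Surjective (vK.v : K → WithZero (Multiplicative ℤ)))
    (α : Completion K)
    (hα : α ∉ Set.range ((↑) : K → Completion K))
    (hαp : α ^ p ∈ Set.range ((↑) : K → Completion K)) :
    Module.finrank K K⟮α⟯ = p ∧
    -- the value group of `(K(α), v̂)` equals the value group of `(K, v)`
    {γ : WithZero (Multiplicative ℤ) | ∃ x : Completion K, x ∈ K⟮α⟯ ∧ x ≠ 0 ∧ Valued.v x = γ}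
      = {γ : WithZero (Multiplicative ℤ) | ∃ c : K, c ≠ 0 ∧ Valued.v ((c : Completion K)) = γ} ∧
    -- every element of the valuation ring of `(K(α), v̂)` is congruent modulo the
    -- maximal ideal to an element of the valuation ring of `(K, v)`
    (∀ x : Completion K, x ∈ K⟮α⟯ → Valued.v x ≤ 1 →
      ∃ c : K, Valued.v c ≤ 1 ∧ Valued.v (x - (c : Completion K)) < 1) ∧
    -- `v` extends uniquely to `K(α)`
    (∀ B₁ B₂ : ValuationSubring K⟮α⟯,
      (∀ c : K, Valued.v c ≤ 1 ↔ algebraMap K K⟮α⟯ c ∈ B₁) →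
      (∀ c : K, Valued.v c ≤ 1 ↔ algebraMap K K⟮α⟯ c ∈ B₂) → B₁ = B₂) := by
  haveI : Fact p.Prime := ⟨hp⟩
  haveI : CharP (Completion K) p :=
    charP_of_injective_ringHom
      (show Function.Injective (Completion.coeRingHom : K →+* Completion K) from
        Completion.coe_injective K) p
  -- the coercion agrees with the algebra map
  have hcoe : ∀ a : K, algebraMap K (Completion K) a = (a : Completion K) := by
    intro a
    simp [UniformSpace.Completion.algebraMap_def]
  -- arithmetic of the coercion
  have coe_pow : ∀ (a : K) (n : ℕ), ((a ^ n : K) : Completion K) = (a : Completion K) ^ n :=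
    fun a n => map_pow (Completion.coeRingHom : K →+* Completion K) a n
  have coe_add : ∀ a b : K, ((a + b : K) : Completion K) = (a : Completion K) + b :=
    fun a b => map_add (Completion.coeRingHom : K →+* Completion K) a b
  have coe_mul : ∀ a b : K, ((a * b : K) : Completion K) = (a : Completion K) * b :=
    fun a b => map_mul (Completion.coeRingHom : K →+* Completion K) a b
  have coe_inv : ∀ a : K, ((a⁻¹ : K) : Completion K) = (a : Completion K)⁻¹ :=
    fun a => map_inv₀ (Completion.coeRingHom : K →+* Completion K) a
  obtain ⟨c, hc⟩ := hαp
  -- density approximation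
  have approx : ∀ (x : Completion K) (γ : (WithZero (Multiplicative ℤ))ˣ),
      ∃ b : K, Valued.v (x - (b : Completion K)) < (γ : WithZero (Multiplicative ℤ)) := by
    intro x γ
    have hball : {y : Completion K |
        Valued.v (y - x) < (γ : WithZero (Multiplicative ℤ))} ∈ nhds x := by
      obtain ⟨a, ha⟩ := hsurj γ
      have hva : Valued.v (a : Completion K) = γ := by
        rw [Valued.valuedCompletion_apply]; exact ha
      have hne : Valued.v (a : Completion K) ≠ 0 := by rw [hva]; exact γ.ne_zero
      refine Valued.mem_nhds.2 ⟨Units.mk0 (Valued.v.restrict (a : Completion K)) (by simpa using hne), ?_⟩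
      intro y hy
      simp only [Set.mem_setOf_eq, Units.val_mk0, Valuation.restrict_lt_iff] at hy ⊢
      rwa [hva] at hy
    obtain ⟨b, hb⟩ := Completion.denseRange_coe.mem_nhds hball
    refine ⟨b, ?_⟩
    rw [Valued.v.map_sub_swap]
    exact hb
  -- every element of K(α) has its p-th power in K
  have hpow : ∀ x : Completion K, x ∈ K⟮α⟯ → ∃ b : K, x ^ p = (b : Completion K) := by
    intro x hx
    induction hx using IntermediateField.adjoin_induction with
    | mem y hy =>
      rw [Set.mem_singleton_iff] at hy
      exact ⟨c, by rw [hy, ← hc]⟩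
    | algebraMap a => exact ⟨a ^ p, by rw [coe_pow, hcoe]⟩
    | add y z hy hz ihy ihz =>
      obtain ⟨a, ha⟩ := ihy
      obtain ⟨b, hb⟩ := ihz
      exact ⟨a + b, by rw [add_pow_char, ha, hb, coe_add]⟩
    | inv y hy ihy =>
      obtain ⟨a, ha⟩ := ihy
      exact ⟨a⁻¹, by rw [inv_pow, ha, coe_inv]⟩
    | mul y z hy hz ihy ihz =>
      obtain ⟨a, ha⟩ := ihy
      obtain ⟨b, hb⟩ := ihz
      exact ⟨a * b, by rw [mul_pow, ha, hb, coe_mul]⟩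
  -- `c` is not a `p`-th power in `K`
  have hcnp : ∀ b : K, b ^ p ≠ c := by
    intro b hb
    apply hα
    refine ⟨b, ?_⟩
    have h0 : ((b : Completion K) - α) ^ p = 0 := by
      rw [sub_pow_char, ← coe_pow, hb, hc, sub_self]
    have := pow_eq_zero_iff hp.ne_zero |>.mp h0
    exact sub_eq_zero.mp this
  have hirr : Irreducible (Polynomial.X ^ p - Polynomial.C c) :=
    X_pow_sub_C_irreducible_of_prime hp hcnp
  have hmonic : (Polynomial.X ^ p - Polynomial.C c).Monic :=
    Polynomial.monic_X_pow_sub_C c hp.ne_zero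
  have haeval : Polynomial.aeval α (Polynomial.X ^ p - Polynomial.C c) = 0 := by
    simp [hcoe, hc]
  have hint : IsIntegral K α := ⟨Polynomial.X ^ p - Polynomial.C c, hmonic, haeval⟩
  have hmin : minpoly K α = Polynomial.X ^ p - Polynomial.C c :=
    (minpoly.eq_of_irreducible_of_monic hirr haeval hmonic).symm
  refine ⟨?_, ?_, ?_, ?_⟩
  · -- degree p
    rw [IntermediateField.adjoin.finrank hint, hmin, Polynomial.natDegree_X_pow_sub_C]
  · -- value groups agree
    ext γ
    constructor
    · rintro ⟨x, hxmem, hx0, rfl⟩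
      have hvx : Valued.v x ≠ 0 := by
        simpa using hx0
      obtain ⟨b, hb⟩ := approx x (Units.mk0 _ hvx)
      have hxb : x - (x - (b : Completion K)) = (b : Completion K) := by ring
      have hvb : Valued.v (b : Completion K) = Valued.v x := by
        rw [← hxb]
        exact Valued.v.map_sub_eq_of_lt_left hb
      refine ⟨b, ?_, hvb⟩
      intro h
      rw [h] at hvb
      apply hvx
      rw [← hvb]
      simp
    · rintro ⟨b, hb0, rfl⟩
      refine ⟨(b : Completion K), hcoe b ▸ K⟮α⟯.algebraMap_mem b, ?_, rfl⟩
      intro h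
      apply hb0
      apply Completion.coe_injective K
      rw [h, Completion.coe_zero]
  · -- residue fields agree
    intro x hxmem hx1
    obtain ⟨b, hb⟩ := approx x 1
    rw [Units.val_one] at hb
    have hxb : x - (x - (b : Completion K)) = (b : Completion K) := by ring
    refine ⟨b, ?_, hb⟩
    rw [← Valued.valuedCompletion_apply, ← hxb]
    calc Valued.v (x - (x - (b : Completion K)))
        ≤ max (Valued.v x) (Valued.v (x - (b : Completion K))) := Valued.v.map_sub _ _
      _ ≤ 1 := max_le hx1 hb.le
  · -- uniqueness of extension
    intro B₁ B₂ h₁ h₂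
    have key : ∀ x : K⟮α⟯, ∃ b : K, x ^ p = algebraMap K K⟮α⟯ b := by
      intro x
      obtain ⟨b, hb⟩ := hpow (x : Completion K) x.2
      refine ⟨b, Subtype.ext ?_⟩
      push_cast
      rw [hb]
      exact (hcoe b).symm ▸ rfl
    have claim : ∀ B : ValuationSubring K⟮α⟯,
        (∀ d : K, Valued.v d ≤ 1 ↔ algebraMap K K⟮α⟯ d ∈ B) →
        ∀ (x : K⟮α⟯) (b : K), x ^ p = algebraMap K K⟮α⟯ b → (x ∈ B ↔ Valued.v b ≤ 1) := by
      intro B hB x b hxb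
      constructor
      · intro hx
        exact (hB b).2 (hxb ▸ pow_mem hx p)
      · intro hvb
        have hxpB : x ^ p ∈ B := hxb ▸ (hB b).1 hvb
        rcases eq_or_ne x 0 with rfl | hx0
        · exact zero_mem B
        rcases B.mem_or_inv_mem x with hx | hx
        · exact hx
        · have hxe : x = x ^ p * (x⁻¹) ^ (p - 1) := by
            rw [inv_pow, ← pow_sub₀ x hx0 (Nat.sub_le p 1),
              Nat.sub_sub_self hp.one_lt.le, pow_one]
          rw [hxe]
          exact mul_mem hxpB (pow_mem hx _)
    apply SetLike.ext
    intro x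
    obtain ⟨b, hb⟩ := key x
    rw [claim B₁ h₁ x b hb, claim B₂ h₂ x b hb]
end

section
/- Let p be a prime and let K be the field of Hahn series with coefficient field 𝔽_p and exponent group ℚ. There exists x ∈ K whose support equals {−p^{−k} : k ≥ 1} such that x^p − x = t^{−1}, where t^{−1} denotes the Hahn series with a single term of exponent −1 and coefficient 1. In particular, since the support of x lies in ℤ[1/p], the Artin–Schreier equation x^p − x = t^{−1} has a solution in the Hahn series field 𝔽_p((t^{1/p^∞})) with exponents in ℤ[1/p]. -/
section AS

variable (p : ℕ)

/-- The exponent sequence `f k = -p^{-k}`. -/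
noncomputable def asExp (k : ℕ) : ℚ := -((p : ℚ) ^ (-(k : ℤ)))

lemma asExp_strictMono (hp : p.Prime) : StrictMono (asExp p) := by
  intro a b hab
  have h1 : (1 : ℚ) < (p : ℚ) := by exact_mod_cast hp.one_lt
  have := zpow_lt_zpow_right₀ h1 (show -(b : ℤ) < -(a : ℤ) by
    exact neg_lt_neg (by exact_mod_cast hab))
  simpa [asExp] using this

lemma asExp_neg (hp : p.Prime) (k : ℕ) : asExp p k < 0 := by
  have h0 : (0 : ℚ) < (p : ℚ) := by exact_mod_cast hp.pos
  have := zpow_pos h0 (-(k : ℤ))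
  simpa [asExp] using this

lemma asExp_mul (hp : p.Prime) (n : ℕ) : (p : ℚ) * asExp p (n + 1) = asExp p n := by
  have h0 : (p : ℚ) ≠ 0 := by exact_mod_cast hp.ne_zero
  simp only [asExp, mul_neg, neg_inj, Nat.cast_add, Nat.cast_one]
  have key := zpow_add₀ h0 1 (-((n : ℤ) + 1))
  rw [zpow_one] at key
  rw [← key]
  congr 1
  ring

/-- The support set of the `n`-th tail: `{-p^{-k} : k > n}`. -/
def asSet (n : ℕ) : Set ℚ := {q | ∃ k : ℕ, n < k ∧ q = asExp p k}

lemma mem_asSet {n : ℕ} {q : ℚ} : q ∈ asSet p n ↔ ∃ k : ℕ, n < k ∧ q = asExp p k := Iff.rfl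

lemma asSet_isPWO (hp : p.Prime) (n : ℕ) : (asSet p n).IsPWO := by
  have : asSet p n = asExp p '' {k | n < k} := by
    ext q
    constructor
    · rintro ⟨k, hk, rfl⟩; exact ⟨k, hk, rfl⟩
    · rintro ⟨k, hk, rfl⟩; exact ⟨k, hk, rfl⟩
  rw [this]
  exact ((Set.IsWF.of_wellFoundedLT _).isPWO).image_of_monotone (asExp_strictMono p hp).monotone

/-- The `n`-th tail series `Σ_{k>n} t^{-p^{-k}}`. -/
noncomputable def asTail (hp : p.Prime) (n : ℕ) : HahnSeries ℚ (ZMod p) :=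
  { coeff := (asSet p n).indicator (fun _ => 1)
    isPWO_support' := (asSet_isPWO p hp n).mono (by
      intro q hq
      by_contra h
      exact hq (Set.indicator_of_notMem h _)) }

lemma asTail_coeff (hp : p.Prime) (n : ℕ) (q : ℚ) :
    (asTail p hp n).coeff q = (asSet p n).indicator (fun _ => 1) q := rfl

lemma asTail_support (hp : p.Prime) (n : ℕ) : (asTail p hp n).support = asSet p n := by
  haveI : Fact p.Prime := ⟨hp⟩
  ext q
  rw [HahnSeries.mem_support, asTail_coeff]
  by_cases h : q ∈ asSet p n
  · simp [Set.indicator_of_mem h, h]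
  · simp [Set.indicator_of_notMem h, h]

lemma asTail_step (hp : p.Prime) (n : ℕ) :
    asTail p hp n = HahnSeries.single (asExp p (n + 1)) 1 + asTail p hp (n + 1) := by
  ext q
  rw [HahnSeries.coeff_add, asTail_coeff, asTail_coeff]
  by_cases h : q = asExp p (n + 1)
  · subst h
    rw [HahnSeries.coeff_single_same]
    rw [Set.indicator_of_mem ((mem_asSet p).mpr ⟨n + 1, by omega, rfl⟩)]
    rw [Set.indicator_of_notMem]
    · simp
    · rintro ⟨k, hk, hke⟩
      have := (asExp_strictMono p hp).injective hke
      omega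
  · rw [HahnSeries.coeff_single_of_ne h, zero_add]
    have hiff : q ∈ asSet p n ↔ q ∈ asSet p (n + 1) := by
      constructor
      · rintro ⟨k, hk, rfl⟩
        refine ⟨k, ?_, rfl⟩
        rcases Nat.lt_or_ge (n + 1) k with hk' | hk'
        · exact hk'
        · exfalso; apply h; congr 1; omega
      · rintro ⟨k, hk, rfl⟩
        exact ⟨k, by omega, rfl⟩
    by_cases hq : q ∈ asSet p n
    · rw [Set.indicator_of_mem hq, Set.indicator_of_mem (hiff.mp hq)]
    · rw [Set.indicator_of_notMem hq, Set.indicator_of_notMem (fun hh => hq (hiff.mpr hh))]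

lemma support_pow_lower {a : HahnSeries ℚ (ZMod p)} {c : ℚ}
    (h : ∀ g ∈ a.support, c ≤ g) :
    ∀ m : ℕ, ∀ g ∈ (a ^ (m + 1)).support, ((m : ℚ) + 1) * c ≤ g := by
  intro m
  induction m with
  | zero => intro g hg; rw [pow_one] at hg; simpa using h g hg
  | succ m ih =>
    intro g hg
    rw [pow_succ] at hg
    obtain ⟨u, hu, v, hv, rfl⟩ := HahnSeries.support_mul_subset hg
    have h1 := ih u hu
    have h2 := h v hv
    push_cast
    nlinarith

lemma support_pow_neg {a : HahnSeries ℚ (ZMod p)}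
    (h : ∀ g ∈ a.support, g < 0) :
    ∀ m : ℕ, ∀ g ∈ (a ^ (m + 1)).support, g < 0 := by
  intro m
  induction m with
  | zero => intro g hg; rw [pow_one] at hg; exact h g hg
  | succ m ih =>
    intro g hg
    rw [pow_succ] at hg
    obtain ⟨u, hu, v, hv, rfl⟩ := HahnSeries.support_mul_subset hg
    exact add_neg (ih u hu) (h v hv)

lemma asTail_key (hp : p.Prime) (n : ℕ) :
    (asTail p hp 0) ^ p - asTail p hp 0 - HahnSeries.single (asExp p 0) 1 =
      (asTail p hp n) ^ p - asTail p hp n - HahnSeries.single (asExp p n) 1 := by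
  haveI : Fact p.Prime := ⟨hp⟩
  haveI : CharP (HahnSeries ℚ (ZMod p)) p :=
    charP_of_injective_ringHom (HahnSeries.C_injective (Γ := ℚ) (R := ZMod p)) p
  induction n with
  | zero => rfl
  | succ n ih =>
    rw [ih, asTail_step p hp n, add_pow_char]
    rw [HahnSeries.single_pow, one_pow, nsmul_eq_mul, asExp_mul p hp n]
    abel

/-- The lower bound on the support of the `n`-th tail. -/
lemma asTail_support_lower (hp : p.Prime) (n : ℕ) :
    ∀ g ∈ (asTail p hp n).support, asExp p (n + 1) ≤ g := by
  rw [asTail_support]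
  rintro g ⟨k, hk, rfl⟩
  exact (asExp_strictMono p hp).monotone (by omega)

lemma asTail_pow_support_lower (hp : p.Prime) (n : ℕ) :
    ∀ g ∈ ((asTail p hp n) ^ p).support, asExp p n ≤ g := by
  intro g hg
  have h1 : ((p : ℚ) - 1 + 1) * asExp p (n + 1) ≤ g := by
    have := support_pow_lower p (asTail_support_lower p hp n) (p - 1) g
      (by rwa [Nat.sub_add_cancel hp.one_le])
    rwa [Nat.cast_sub hp.one_le, Nat.cast_one] at this
  rw [sub_add_cancel, asExp_mul p hp n] at h1
  exact h1

theorem artin_schreier_aux (hp : p.Prime) :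
    (asTail p hp 0) ^ p - asTail p hp 0 = HahnSeries.single (asExp p 0) 1 := by
  haveI : Fact p.Prime := ⟨hp⟩
  rw [← sub_eq_zero]
  ext q
  rw [HahnSeries.coeff_zero]
  by_cases hq0 : q < 0
  · -- pick n with q < asExp p n
    have h1 : (1 : ℚ) < (p : ℚ) := by exact_mod_cast hp.one_lt
    obtain ⟨n, hn⟩ := pow_unbounded_of_one_lt ((-q)⁻¹) h1
    have hqn : q < asExp p n := by
      have hq' : (0 : ℚ) < -q := by linarith
      have h2 : ((p : ℚ) ^ n)⁻¹ < -q := inv_lt_of_inv_lt₀ hq' hn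
      have h3 : (p : ℚ) ^ (-(n : ℤ)) = ((p : ℚ) ^ n)⁻¹ := by
        rw [zpow_neg, zpow_natCast]
      rw [asExp, h3]
      linarith
    rw [asTail_key p hp n]
    rw [HahnSeries.coeff_sub, HahnSeries.coeff_sub,
      HahnSeries.coeff_single_of_ne (ne_of_lt hqn)]
    have e1 : ((asTail p hp n) ^ p).coeff q = 0 := by
      by_contra h
      exact absurd (asTail_pow_support_lower p hp n q h) (not_le.mpr hqn)
    have e2 : (asTail p hp n).coeff q = 0 := by
      by_contra h
      have := asTail_support_lower p hp n q h
      have hmono := (asExp_strictMono p hp).monotone (Nat.le_succ n)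
      linarith
    rw [e1, e2]
    ring
  · push_neg at hq0
    rw [HahnSeries.coeff_sub, HahnSeries.coeff_sub,
      HahnSeries.coeff_single_of_ne (by
        intro h
        have := asExp_neg p hp 0
        rw [← h] at this
        linarith)]
    have hneg : ∀ g ∈ (asTail p hp 0).support, g < 0 := by
      rw [asTail_support]
      rintro g ⟨k, _, rfl⟩
      exact asExp_neg p hp k
    have e1 : ((asTail p hp 0) ^ p).coeff q = 0 := by
      by_contra h
      have := support_pow_neg p hneg (p - 1) q (by rwa [Nat.sub_add_cancel hp.one_le])
      linarith
    have e2 : (asTail p hp 0).coeff q = 0 := by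
      by_contra h
      exact absurd (hneg q h) (not_lt.mpr hq0)
    rw [e1, e2]
    ring

end AS

/-- Let `p` be a prime and let `K = 𝔽_p((t^ℚ))` be the field of Hahn
series with coefficient field `𝔽_p` and exponent group `ℚ`.  There exists `x ∈ K` whose
support equals `{-p^(-k) : k ≥ 1}` such that `x^p - x = t⁻¹`, where `t⁻¹` is the Hahn
series with a single term of exponent `-1` and coefficient `1`.  In particular the support
of `x` lies in `ℤ[1/p]`, so the Artin–Schreier equation `x^p - x = t⁻¹` has a solution in
the Hahn series field `𝔽_p((t^{1/p^∞}))` with exponents in `ℤ[1/p]`. -/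
theorem artin_schreier_solution_in_hahn_series (p : ℕ) (hp : p.Prime) :
    ∃ x : HahnSeries ℚ (ZMod p),
      x.support = {q : ℚ | ∃ k : ℕ, 1 ≤ k ∧ q = -((p : ℚ) ^ (-(k : ℤ)))} ∧
      x ^ p - x = HahnSeries.single (-1 : ℚ) (1 : ZMod p) ∧
      ∀ q ∈ x.support, ∃ m : ℤ, ∃ k : ℕ, q = (m : ℚ) / (p : ℚ) ^ k := by
  refine ⟨asTail p hp 0, ?_, ?_, ?_⟩
  · rw [asTail_support]
    ext q
    constructor
    · rintro ⟨k, hk, rfl⟩; exact ⟨k, by omega, rfl⟩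
    · rintro ⟨k, hk, rfl⟩; exact ⟨k, by omega, rfl⟩
  · have := artin_schreier_aux p hp
    rwa [show asExp p 0 = (-1 : ℚ) by simp [asExp]] at this
  · rw [asTail_support]
    rintro q ⟨k, hk, rfl⟩
    refine ⟨-1, k, ?_⟩
    rw [asExp, zpow_neg, zpow_natCast]
    push_cast
    ring
end

section
/- Let p be a prime, let K₀ = 𝔽_p((t)) be the field of formal Laurent series over 𝔽_p, and let ι : K₀ → P be the canonical embedding of K₀ into its perfect closure P = PerfectClosure(K₀, p) (the perfection of K₀, a perfect field of characteristic p). Then there is no element x ∈ P with x^p − x = ι(t^{−1}). -/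
open LaurentSeries

/-- The Laurent series field `𝔽_p((t))` has characteristic `p`. -/
instance laurentSeries_charP (p : ℕ) [Fact p.Prime] :
    CharP (LaurentSeries (ZMod p)) p :=
  charP_of_injective_ringHom
    (HahnSeries.C_injective : Function.Injective (HahnSeries.C : ZMod p →+* LaurentSeries (ZMod p))) p

/-- Auxiliary: the Artin–Schreier equation `y^p - y = t^(-p^n)` has no solution in
`𝔽_p((t))` itself. -/
theorem artin_schreier_aux_s8 (p : ℕ) [Fact p.Prime] :
    ∀ n : ℕ, ∀ y : LaurentSeries (ZMod p),
      y ^ p - y ≠ HahnSeries.single (-(p ^ n : ℤ)) (1 : ZMod p) := by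
  have hp := (Fact.out : p.Prime)
  have hp2 : 2 ≤ p := hp.two_le
  have hone : (1 : ZMod p) ≠ 0 := one_ne_zero
  intro n
  induction n with
  | zero =>
    intro y h
    simp only [pow_zero] at h
    rcases eq_or_ne y 0 with rfl | hy
    · rw [zero_pow hp.ne_zero, sub_zero] at h
      exact hone (by simpa using congrArg (fun z => HahnSeries.coeff z (-1)) h.symm)
    have hyp : y ^ p ≠ 0 := pow_ne_zero _ hy
    have hop : (y ^ p).order = (p : ℤ) * y.order := by
      rw [HahnSeries.order_pow, nsmul_eq_mul]
    rcases le_or_gt 0 y.order with hd0 | hd0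
    · have h1 : (y ^ p).coeff (-1) = 0 := by
        apply HahnSeries.coeff_eq_zero_of_lt_order
        rw [hop]
        nlinarith
      have h2 : y.coeff (-1) = 0 :=
        HahnSeries.coeff_eq_zero_of_lt_order (by omega)
      have := congrArg (fun z => HahnSeries.coeff z (-1)) h
      simp only [HahnSeries.coeff_sub, Pi.sub_apply, h1, h2, sub_zero,
        HahnSeries.coeff_single_same] at this
      exact hone this.symm
    · have hlt : (p : ℤ) * y.order < y.order := by nlinarith
      have h2 : y.coeff ((p : ℤ) * y.order) = 0 :=
        HahnSeries.coeff_eq_zero_of_lt_order hlt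
      have h3 : (y ^ p).coeff ((p : ℤ) * y.order) ≠ 0 := by
        rw [← hop]; exact fun h0 => hyp (HahnSeries.coeff_order_eq_zero.mp h0)
      have h4 : ((p : ℤ) * y.order) ≠ -1 := by nlinarith
      have := congrArg (fun z => HahnSeries.coeff z ((p : ℤ) * y.order)) h
      simp only [HahnSeries.coeff_sub, Pi.sub_apply, h2, sub_zero,
        HahnSeries.coeff_single_of_ne h4] at this
      exact h3 this
  | succ n ih =>
    intro y h
    apply ih (y - HahnSeries.single (-(p ^ n : ℤ)) (1 : ZMod p))
    rw [sub_pow_char, HahnSeries.single_pow, one_pow,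
      show p • (-(p ^ n : ℤ)) = -(p ^ (n + 1) : ℤ) by rw [nsmul_eq_mul]; ring]
    linear_combination h

/-- Let `p` be a prime, let `K₀ = 𝔽_p((t))` be the field of formal
Laurent series over `𝔽_p`, and let `ι : K₀ → P` be the canonical embedding of `K₀` into
its perfect closure `P = PerfectClosure K₀ p`.  Then there is no element `x ∈ P` with
`x^p - x = ι(t⁻¹)`. -/
theorem artin_schreier_no_solution_in_perfect_closure (p : ℕ) [Fact p.Prime] :
    ¬ ∃ x : PerfectClosure (LaurentSeries (ZMod p)) p,
      x ^ p - x =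
        PerfectClosure.of (LaurentSeries (ZMod p)) p
          (HahnSeries.single (-1 : ℤ) (1 : ZMod p)) := by
  rintro ⟨x, hx⟩
  set K := LaurentSeries (ZMod p)
  obtain ⟨⟨n, a⟩, rfl⟩ := PerfectClosure.mk_surjective (K := K) (p := p) x
  set P := PerfectClosure K p
  -- apply the `n`-th iterate of Frobenius to both sides
  have h2 := congrArg (iterateFrobenius P p n) hx
  rw [map_sub, map_pow, coe_iterateFrobenius, PerfectClosure.iterate_frobenius_mk,
    ← coe_iterateFrobenius, iterateFrobenius_def, ← map_pow, ← map_pow, ← map_sub] at h2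
  have h3 : a ^ p - a = (HahnSeries.single (-1 : ℤ) (1 : ZMod p)) ^ p ^ n :=
    (PerfectClosure.of K p).injective h2
  rw [HahnSeries.single_pow, one_pow] at h3
  apply artin_schreier_aux_s8 p n a
  rw [h3]
  congr 1
  ring
end
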